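/- Let P ⊆ ℤ be the set of prime numbers and let n be a positive even integer. The partial translation operator tₙ on ℓ²(P) is not a compact operator if and only if there exist infinitely many primes p such that p + n is also prime (i.e., de Polignac's conjecture holds for n). -/

import Mathlib

noncomputable section

/-- The set of prime numbers, viewed as a subset of ℤ. -/
abbrev Pr : Set ℤ := {x : ℤ | ∃ p : ℕ, p.Prime ∧ x = (p : ℤ)}

abbrev l2P : Type := lp (fun _ : Pr => ℂ) 2

/-- The standard basis vector δₓ of ℓ²(P). -/
def δ (x : Pr) : l2P := lp.single 2 x 1

open scoped InnerProductSpace ComplexConjugate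

lemma δ_inner (x y : Pr) : ⟪δ x, δ y⟫_ℂ = if x = y then 1 else 0 := by
  classical
  rw [δ, lp.inner_single_left]
  by_cases h : x = y
  · subst h
    simp [δ, lp.single_apply_self, RCLike.inner_apply]
  · rw [δ, lp.single_apply_ne 2 y 1 h, if_neg h]
    simp [RCLike.inner_apply]

lemma δ_norm (x : Pr) : ‖δ x‖ = 1 := by
  have := lp.norm_single (p := 2) (E := fun _ : Pr => ℂ) (by norm_num) x (1:ℂ)
  simpa [δ] using this

lemma δ_dist {a b : Pr} (h : a ≠ b) : 1 ≤ ‖δ a - δ b‖ := by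
  have h2 : ‖δ a - δ b‖ ^ 2 = 2 := by
    rw [@norm_sub_sq ℂ, δ_inner, if_neg h]
    simp [δ_norm]
    norm_num
  nlinarith [norm_nonneg (δ a - δ b)]

lemma δ_dense : Dense (Submodule.span ℂ (Set.range δ) : Set l2P) := by
  intro f
  refine mem_closure_of_tendsto
    (lp.hasSum_single (E := fun _ : Pr => ℂ) ENNReal.ofNat_ne_top f)
    (Filter.Eventually.of_forall ?_)
  intro s
  simp only [SetLike.mem_coe]
  refine Submodule.sum_mem _ ?_
  intro i _
  have : lp.single 2 i (f i) = (f i) • δ i := by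
    rw [δ, ← lp.single_smul]
    norm_num
  rw [this]
  exact Submodule.smul_mem _ _ (Submodule.subset_span ⟨i, rfl⟩)

lemma rank1_compact {E F : Type*} [NormedAddCommGroup E] [NormedSpace ℂ E]
    [NormedAddCommGroup F] [NormedSpace ℂ F]
    (g : E →L[ℂ] ℂ) (v : F) : IsCompactOperator fun f => g f • v := by
  refine ⟨(fun c : ℂ => c • v) '' Metric.closedBall 0 1, ?_, ?_⟩
  · exact (isCompact_closedBall 0 1).image (continuous_id.smul continuous_const)
  · have h1 : g ⁻¹' (Metric.closedBall 0 1) ∈ nhds (0 : E) := by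
      refine g.continuous.continuousAt.preimage_mem_nhds ?_
      rw [map_zero]
      exact Metric.closedBall_mem_nhds 0 one_pos
    refine Filter.mem_of_superset h1 ?_
    intro f hf
    exact ⟨g f, hf, rfl⟩

lemma sum_compact {ι E F : Type*} [NormedAddCommGroup E] [NormedSpace ℂ E]
    [NormedAddCommGroup F] [NormedSpace ℂ F] (s : Finset ι)
    (A : ι → (E →L[ℂ] F)) (hA : ∀ i, IsCompactOperator (A i)) :
    IsCompactOperator ⇑(∑ i ∈ s, A i) := by
  classical
  induction s using Finset.induction with
  | empty => simpa using isCompactOperator_zero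
  | @insert a s h ih =>
      rw [Finset.sum_insert h]
      have h2 : ⇑(A a + ∑ i ∈ s, A i) = ⇑(A a) + ⇑(∑ i ∈ s, A i) :=
        rfl
      rw [h2]
      exact (hA a).add ih

/-- For a positive even integer `n`, the partial translation operator `tₙ` on `ℓ²(P)`
(`P` the primes) is not compact if and only if there are infinitely many primes `p`
with `p + n` prime (de Polignac's conjecture for `n`). -/
theorem stmt10 (n : ℤ) (hn : 0 < n) (hn2 : Even n)
    (t : l2P →L[ℂ] l2P)
    (ht : ∀ x : Pr,
      (∀ h : (x : ℤ) + n ∈ Pr, t (δ x) = δ ⟨(x : ℤ) + n, h⟩) ∧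
      ((x : ℤ) + n ∉ Pr → t (δ x) = 0)) :
    ¬ IsCompactOperator t ↔ {p : ℤ | p ∈ Pr ∧ p + n ∈ Pr}.Infinite := by
  classical
  set S' : Set Pr := {x : Pr | (x : ℤ) + n ∈ Pr} with hS'
  have hiff : {p : ℤ | p ∈ Pr ∧ p + n ∈ Pr}.Infinite ↔ S'.Infinite := by
    have himg : {p : ℤ | p ∈ Pr ∧ p + n ∈ Pr} = Subtype.val '' S' := by
      ext p
      constructor
      · rintro ⟨hp, hpn⟩; exact ⟨⟨p, hp⟩, hpn, rfl⟩
      · rintro ⟨⟨q, hq⟩, hx, rfl⟩; exact ⟨hq, hx⟩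
    rw [himg, Set.infinite_image_iff Subtype.val_injective.injOn]
  rw [hiff]
  constructor
  · -- not compact → infinite
    intro hnc
    by_contra hfin
    rw [Set.not_infinite] at hfin
    apply hnc
    set F : Finset Pr := hfin.toFinset with hF
    set s : l2P →L[ℂ] l2P :=
      ∑ x ∈ F, ((innerSL ℂ (δ x)).smulRight (t (δ x))) with hs
    have hts : t = s := by
      refine ContinuousLinearMap.ext_on δ_dense ?_
      rintro _ ⟨y, rfl⟩
      rw [hs, ContinuousLinearMap.sum_apply]
      simp only [ContinuousLinearMap.smulRight_apply, innerSL_apply_apply, δ_inner]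
      simp only [ite_smul, one_smul, zero_smul]
      rw [Finset.sum_ite_eq' F y (fun x => t (δ x))]
      by_cases hy : y ∈ F
      · rw [if_pos hy]
      · rw [if_neg hy]
        have hyS : (y : ℤ) + n ∉ Pr := by
          intro h
          exact hy (hfin.mem_toFinset.mpr h)
        rw [(ht y).2 hyS]
    rw [hts, hs]
    refine sum_compact F _ (fun x => ?_)
    exact rank1_compact (innerSL ℂ (δ x)) (t (δ x))
  · -- infinite → not compact
    intro hinf hc
    obtain ⟨K, hKc, hKmem⟩ := hc
    obtain ⟨ε, hε, hball⟩ := Metric.mem_nhds_iff.mp hKmem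
    set e : ℕ ↪ S' := hinf.natEmbedding _ with he
    have hx : ∀ k : ℕ, ((e k : Pr) : ℤ) + n ∈ Pr := fun k => (e k).2
    set u : ℕ → l2P := fun k => δ ⟨((e k : Pr) : ℤ) + n, hx k⟩ with hu
    set c : ℂ := ((ε / 2 : ℝ) : ℂ) with hc'
    have hcnorm : ‖c‖ = ε / 2 := by
      rw [hc', Complex.norm_real, Real.norm_eq_abs, abs_of_pos (by linarith)]
    have hmem : ∀ k, c • u k ∈ K := by
      intro k
      have h1 : t (c • δ (e k)) = c • u k := by
        rw [map_smul, (ht (e k)).1 (hx k)]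
      have h2 : c • δ ((e k : Pr)) ∈ Metric.ball (0 : l2P) ε := by
        rw [Metric.mem_ball, dist_zero_right, norm_smul, δ_norm, hcnorm]
        linarith
      rw [← h1]
      exact hball h2
    obtain ⟨a, _, φ, hφ, hconv⟩ := hKc.tendsto_subseq hmem
    rw [Metric.tendsto_atTop] at hconv
    obtain ⟨N, hN⟩ := hconv (ε / 4) (by linarith)
    have hdist : dist (c • u (φ N)) (c • u (φ (N + 1))) < ε / 2 := by
      calc dist (c • u (φ N)) (c • u (φ (N + 1)))
          ≤ dist (c • u (φ N)) a + dist a (c • u (φ (N + 1))) := dist_triangle _ _ _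
        _ < ε / 4 + ε / 4 := by
            have h1 := hN N (le_refl N)
            have h2 := hN (N + 1) (Nat.le_succ N)
            rw [dist_comm a]
            exact add_lt_add h1 h2
        _ = ε / 2 := by ring
    have hne : (⟨((e (φ N) : Pr) : ℤ) + n, hx (φ N)⟩ : Pr)
        ≠ ⟨((e (φ (N + 1)) : Pr) : ℤ) + n, hx (φ (N + 1))⟩ := by
      intro h
      have h0 : ((e (φ N) : Pr) : ℤ) + n = ((e (φ (N + 1)) : Pr) : ℤ) + n :=
        congrArg Subtype.val h
      have h1 : ((e (φ N) : Pr) : ℤ) = ((e (φ (N + 1)) : Pr) : ℤ) := by linarith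
      have h2 : e (φ N) = e (φ (N + 1)) := Subtype.ext (Subtype.ext h1)
      have h3 : φ N = φ (N + 1) := e.injective h2
      have h4 : N = N + 1 := hφ.injective h3
      omega
    have hge : ε / 2 ≤ dist (c • u (φ N)) (c • u (φ (N + 1))) := by
      rw [dist_eq_norm, ← smul_sub, norm_smul, hcnorm]
      have hd := δ_dist hne
      have hueq : u (φ N) - u (φ (N + 1)) =
          δ ⟨((e (φ N) : Pr) : ℤ) + n, hx (φ N)⟩ -
          δ ⟨((e (φ (N + 1)) : Pr) : ℤ) + n, hx (φ (N + 1))⟩ := rfl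
      rw [hueq]
      nlinarith
    linarith
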